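/- Let n ≥ 1 and let π be a permutation of the interval [0, 4^n). For 0 ≤ i < 2^n, call the i-th sub-block the interval X_i = [i·2^n, (i+1)·2^n). Call a sub-block X_i 'big' if there exists s ∈ [1, 4^n] with |π(X_i) ∩ [0,s)| / s > 1/n. Then the number of big sub-blocks is at most n · H(2^n), where H(m) = ∑_{k=1}^{m} 1/k is the m-th harmonic number. -/

import Mathlib

open Filter Topology Classical

/-- `cnt A n = |A ∩ [0,n)|`. -/
noncomputable def cnt (A : Set ℕ) (n : ℕ) : ℕ :=
  ((Finset.range n).filter (· ∈ A)).card

/-- `dens A n = |A ∩ [0,n)| / n`, the density of `A` at `n`. -/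
noncomputable def dens (A : Set ℕ) (n : ℕ) : ℝ := (cnt A n : ℝ) / n

/-- The `i`-th sub-block of `[0,4^n)`: the interval `[i·2^n, (i+1)·2^n)`. -/
def subBlock (n i : ℕ) : Finset ℕ := Finset.Ico (i * 2 ^ n) ((i + 1) * 2 ^ n)

/-- Sub-block `i` is big for `π` on `[0,4^n)`: some `s ∈ [1,4^n]` has
`|π(X_i) ∩ [0,s)| / s > 1/n`. -/
noncomputable def Big (n : ℕ) (π : ℕ → ℕ) (i : ℕ) : Prop :=
  ∃ s, 1 ≤ s ∧ s ≤ 4 ^ n ∧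
    (1 : ℝ) / n < (((subBlock n i).image π).filter (· < s)).card / s

/- ### Auxiliary definitions for the proof -/

/-- A chosen witness `s` for a big block (or `1` if the block is not big). -/
noncomputable def wit (n : ℕ) (π : ℕ → ℕ) (i : ℕ) : ℕ :=
  if h : Big n π i then h.choose else 1

/-- The trace of the image of block `i` below its witness. -/
noncomputable def Fi (n : ℕ) (π : ℕ → ℕ) (i : ℕ) : Finset ℕ :=
  ((subBlock n i).image π).filter (· < wit n π i)

/-- The count of the trace. -/
noncomputable def ci (n : ℕ) (π : ℕ → ℕ) (i : ℕ) : ℕ := (Fi n π i).card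

lemma wit_spec {n : ℕ} {π : ℕ → ℕ} {i : ℕ} (h : Big n π i) :
    1 ≤ wit n π i ∧ wit n π i ≤ 4 ^ n ∧
      (1 : ℝ) / n < (ci n π i : ℝ) / (wit n π i : ℝ) := by
  have h' := h.choose_spec
  unfold ci Fi wit
  rw [dif_pos h]
  exact h'

lemma ci_pos {n : ℕ} {π : ℕ → ℕ} {i : ℕ} (h : Big n π i) : 1 ≤ ci n π i := by
  obtain ⟨h1, _, h3⟩ := wit_spec h
  rcases Nat.eq_zero_or_pos (ci n π i) with h0 | h0
  · rw [h0] at h3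
    have hn0 : (0:ℝ) ≤ 1 / (n:ℝ) := by positivity
    simp at h3
    linarith
  · exact h0

lemma wit_lt {n : ℕ} {π : ℕ → ℕ} {i : ℕ} (hn : 1 ≤ n) (h : Big n π i) :
    wit n π i < n * ci n π i := by
  obtain ⟨h1, _, h3⟩ := wit_spec h
  have hnR : (0:ℝ) < (n:ℝ) := by exact_mod_cast Nat.lt_of_lt_of_le Nat.zero_lt_one hn
  have hsR : (0:ℝ) < (wit n π i : ℝ) := by exact_mod_cast h1
  rw [div_lt_div_iff₀ hnR hsR] at h3
  have : (wit n π i : ℝ) < ((n * ci n π i : ℕ) : ℝ) := by push_cast; nlinarith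
  exact_mod_cast this

lemma ci_le (n : ℕ) (π : ℕ → ℕ) (i : ℕ) : ci n π i ≤ 2 ^ n := by
  have h1 : ci n π i ≤ ((subBlock n i).image π).card := Finset.card_filter_le _ _
  have h2 : ((subBlock n i).image π).card ≤ (subBlock n i).card := Finset.card_image_le
  have h3 : (subBlock n i).card = 2 ^ n := by
    simp only [subBlock, Nat.card_Ico]
    rw [add_mul, one_mul, Nat.add_sub_cancel_left]
  omega

lemma images_disjoint (n : ℕ) (π : ℕ → ℕ) (hπ : Set.InjOn π (Set.Ico 0 (4 ^ n)))
    {i j : ℕ} (hi : i < 2 ^ n) (hj : j < 2 ^ n) (hij : i ≠ j) :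
    Disjoint ((subBlock n i).image π) ((subBlock n j).image π) := by
  have h4 : ∀ {k x : ℕ}, k < 2 ^ n → x ∈ subBlock n k → x < 4 ^ n := by
    intro k x hk hx
    have hx' := Finset.mem_Ico.mp hx
    calc x < (k + 1) * 2 ^ n := hx'.2
      _ ≤ 2 ^ n * 2 ^ n := mul_le_mul_left (by omega) _
      _ = 4 ^ n := by rw [← mul_pow]; norm_num
  rw [Finset.disjoint_left]
  rintro y hy1 hy2
  obtain ⟨a, ha, rfl⟩ := Finset.mem_image.mp hy1
  obtain ⟨b, hb, hba⟩ := Finset.mem_image.mp hy2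
  have hab : a = b := hπ ⟨Nat.zero_le _, h4 hi ha⟩ ⟨Nat.zero_le _, h4 hj hb⟩ hba.symm
  subst hab
  have ha' := Finset.mem_Ico.mp ha
  have hb' := Finset.mem_Ico.mp hb
  rcases Nat.lt_or_ge i j with hlt | hge
  · have hm : (i + 1) * 2 ^ n ≤ j * 2 ^ n := mul_le_mul_left (by omega) _
    exact Nat.lt_irrefl a (lt_of_lt_of_le (lt_of_lt_of_le ha'.2 hm) hb'.1)
  · have hlt : j < i := lt_of_le_of_ne hge (Ne.symm hij)
    have hm : (j + 1) * 2 ^ n ≤ i * 2 ^ n := mul_le_mul_left (by omega) _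
    exact Nat.lt_irrefl a (lt_of_lt_of_le (lt_of_lt_of_le hb'.2 hm) ha'.1)

/-- Telescoping sum of `1/j - 1/(j+1)`. -/
lemma tel_inv {m k : ℕ} (h : m ≤ k) :
    ∑ j ∈ Finset.Ico m k, (1 / (j:ℝ) - 1 / ((j:ℝ) + 1)) = 1 / (m:ℝ) - 1 / (k:ℝ) := by
  induction k, h using Nat.le_induction with
  | base => simp
  | succ k hk ih =>
      rw [Finset.sum_Ico_succ_top hk, ih]
      push_cast
      ring

/-- Weight function for the Abel summation. -/
noncomputable def wfun (B : ℕ) : ℕ → ℝ :=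
  fun k => if k = B then 1 / (B:ℝ) else 1 / ((k:ℝ) * ((k:ℝ) + 1))

lemma wfun_nonneg (B k : ℕ) : 0 ≤ wfun B k := by
  unfold wfun
  split <;> positivity

lemma wfun_tel (B d : ℕ) (hd : 1 ≤ d) (hdB : d ≤ B) :
    ∑ k ∈ Finset.Icc d B, wfun B k = 1 / (d:ℝ) := by
  have hstep : ∀ k ∈ Finset.Ico d B,
      wfun B k = 1 / (k:ℝ) - 1 / ((k:ℝ) + 1) := by
    intro k hk
    obtain ⟨hk1, hk2⟩ := Finset.mem_Ico.mp hk
    have hk0 : (0:ℝ) < (k:ℝ) := by exact_mod_cast lt_of_lt_of_le hd hk1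
    have h1 : (k:ℝ) ≠ 0 := hk0.ne'
    have h2 : (k:ℝ) + 1 ≠ 0 := by positivity
    simp only [wfun, if_neg (Nat.ne_of_lt hk2)]
    field_simp
    ring
  rw [← Finset.Ico_add_one_right_eq_Icc, Finset.sum_Ico_succ_top hdB, Finset.sum_congr rfl hstep,
    tel_inv hdB]
  have hwB : wfun B B = 1 / (B:ℝ) := by simp [wfun]
  rw [hwB]
  ring

lemma wfun_weighted (B : ℕ) (hB : 1 ≤ B) :
    ∑ k ∈ Finset.Icc 1 B, (k:ℝ) * wfun B k = ∑ k ∈ Finset.Icc 1 B, 1 / (k:ℝ) := by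
  rw [← sub_eq_zero, ← Finset.sum_sub_distrib]
  rw [← Finset.Ico_add_one_right_eq_Icc, Finset.sum_Ico_succ_top hB]
  have hstep : ∀ k ∈ Finset.Ico 1 B,
      (k:ℝ) * wfun B k - 1 / (k:ℝ)
        = -(1 / (k:ℝ) - 1 / ((k:ℝ) + 1)) := by
    intro k hk
    obtain ⟨hk1, hk2⟩ := Finset.mem_Ico.mp hk
    have hk0 : (0:ℝ) < (k:ℝ) := by exact_mod_cast hk1
    have h1 : (k:ℝ) ≠ 0 := hk0.ne'
    have h2 : (k:ℝ) + 1 ≠ 0 := by positivity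
    simp only [wfun, if_neg (Nat.ne_of_lt hk2)]
    field_simp
    ring
  rw [Finset.sum_congr rfl hstep, Finset.sum_neg_distrib, tel_inv hB]
  have hB0 : (0:ℝ) < (B:ℝ) := by exact_mod_cast hB
  have h1 : (B:ℝ) ≠ 0 := hB0.ne'
  have hwB : wfun B B = 1 / (B:ℝ) := by simp [wfun]
  rw [hwB]
  field_simp
  push_cast
  ring

theorem stmt3 (n : ℕ) (hn : 1 ≤ n) (π : ℕ → ℕ)
    (hπ : Set.BijOn π (Set.Ico 0 (4 ^ n)) (Set.Ico 0 (4 ^ n))) :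
    (((Finset.range (2 ^ n)).filter (Big n π)).card : ℝ) ≤
      n * ∑ k ∈ Finset.Icc (1:ℕ) (2 ^ n), (1 : ℝ) / (k:ℝ) := by
  classical
  set B := 2 ^ n with hBdef
  set S := (Finset.range (2 ^ n)).filter (Big n π) with hSdef
  have hB1 : 1 ≤ B := Nat.one_le_two_pow
  have hbig : ∀ i ∈ S, Big n π i := fun i hi => (Finset.mem_filter.mp hi).2
  have hrange : ∀ i ∈ S, i < 2 ^ n := fun i hi =>
    Finset.mem_range.mp (Finset.mem_filter.mp hi).1
  -- key counting lemma
  have hkey : ∀ m : ℕ, (∑ i ∈ S.filter (fun i => ci n π i ≤ m), ci n π i) ≤ n * m := by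
    intro m
    set S' := S.filter (fun i => ci n π i ≤ m) with hS'
    have hS'S : ∀ i ∈ S', i ∈ S := fun i hi => (Finset.mem_filter.mp hi).1
    have hdisj : ∀ i ∈ S', ∀ j ∈ S', i ≠ j → Disjoint (Fi n π i) (Fi n π j) := by
      intro i hi j hj hij
      exact Finset.disjoint_filter_filter
        (images_disjoint n π hπ.injOn (hrange i (hS'S i hi)) (hrange j (hS'S j hj)) hij)
    calc (∑ i ∈ S', ci n π i) = (S'.biUnion (Fi n π)).card :=
          (Finset.card_biUnion hdisj).symm
      _ ≤ (Finset.range (n * m)).card := by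
          apply Finset.card_le_card
          intro y hy
          obtain ⟨i, hi, hyF⟩ := Finset.mem_biUnion.mp hy
          have hbigi := hbig i (hS'S i hi)
          have hcim : ci n π i ≤ m := (Finset.mem_filter.mp hi).2
          have hy2 : y < wit n π i := (Finset.mem_filter.mp hyF).2
          have hw := wit_lt hn hbigi
          have : y < n * ci n π i := lt_trans hy2 hw
          exact Finset.mem_range.mpr
            (lt_of_lt_of_le this (Nat.mul_le_mul_left n hcim))
      _ = n * m := Finset.card_range _
  have hc1 : ∀ i ∈ S, 1 ≤ ci n π i := fun i hi => ci_pos (hbig i hi)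
  have hcB : ∀ i ∈ S, ci n π i ≤ B := fun i hi => ci_le n π i
  -- Abel summation
  have step1 : (S.card : ℝ)
      = ∑ i ∈ S, ∑ k ∈ Finset.Icc 1 B, (if ci n π i ≤ k then (ci n π i : ℝ) * wfun B k else 0) := by
    rw [Finset.card_eq_sum_ones]
    push_cast
    apply Finset.sum_congr rfl
    intro i hi
    have h1 := hc1 i hi
    have h2 := hcB i hi
    have hcne : ((ci n π i : ℝ)) ≠ 0 := by
      have : (0:ℝ) < (ci n π i : ℝ) := by exact_mod_cast h1
      exact this.ne'
    have hicc : Finset.Icc (ci n π i) B = (Finset.Icc 1 B).filter (fun k => ci n π i ≤ k) := by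
      ext k
      simp only [Finset.mem_Icc, Finset.mem_filter]
      omega
    calc (1:ℝ) = (ci n π i : ℝ) * (1 / (ci n π i : ℝ)) := by field_simp
      _ = (ci n π i : ℝ) * ∑ k ∈ Finset.Icc (ci n π i) B, wfun B k := by
          rw [wfun_tel B _ h1 h2]
      _ = ∑ k ∈ Finset.Icc (ci n π i) B, (ci n π i : ℝ) * wfun B k := by
          rw [Finset.mul_sum]
      _ = ∑ k ∈ Finset.Icc 1 B, (if ci n π i ≤ k then (ci n π i : ℝ) * wfun B k else 0) := by
          rw [hicc, Finset.sum_filter]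
  have step2 : (S.card : ℝ)
      = ∑ k ∈ Finset.Icc 1 B, (((∑ i ∈ S.filter (fun i => ci n π i ≤ k), ci n π i : ℕ)) : ℝ) * wfun B k := by
    rw [step1, Finset.sum_comm]
    apply Finset.sum_congr rfl
    intro k _
    rw [← Finset.sum_filter]
    push_cast
    rw [Finset.sum_mul]
  have step3 : (S.card : ℝ) ≤ ∑ k ∈ Finset.Icc 1 B, ((n : ℝ) * (k : ℝ)) * wfun B k := by
    rw [step2]
    apply Finset.sum_le_sum
    intro k _
    apply mul_le_mul_of_nonneg_right _ (wfun_nonneg B k)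
    have := hkey k
    calc (((∑ i ∈ S.filter (fun i => ci n π i ≤ k), ci n π i : ℕ)) : ℝ)
        ≤ ((n * k : ℕ) : ℝ) := by exact_mod_cast this
      _ = (n : ℝ) * (k : ℝ) := by push_cast; ring
  calc (S.card : ℝ) ≤ ∑ k ∈ Finset.Icc 1 B, ((n : ℝ) * (k : ℝ)) * wfun B k := step3
    _ = (n : ℝ) * ∑ k ∈ Finset.Icc 1 B, (k : ℝ) * wfun B k := by
        rw [Finset.mul_sum]
        apply Finset.sum_congr rfl
        intro k _
        ring
    _ = (n : ℝ) * ∑ k ∈ Finset.Icc 1 B, 1 / (k : ℝ) := by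
        rw [wfun_weighted B hB1]
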